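/- Let G be a unimodular locally compact second countable group with Haar measure m, equipped with a proper left-invariant metric d inducing its topology. Let r > 0 and let Λ : Ω → Measure(G) be a stationary point process on G (with respect to the left translation action) which is 2r-uniformly discrete and has intensity c > 0, i.e. E[Λ(B)] = c · m(B) for every Borel set B. Let h : G → ℝ be continuous with compact support such that h(g⁻¹) = h(g) for all g ∈ G, ∫_G h dm ≠ 0, and (h ⋆ h)(g) ≤ 0 whenever d(g, e) ≥ 2r, where (h ⋆ h)(x) := ∫_G h(t) h(t⁻¹x) dm(t). Then c ≤ ( ∫_G h² dm ) / ( ∫_G h dm )². -/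

import Mathlib

open MeasureTheory ENNReal NNReal Metric Function
open scoped Pointwise

set_option linter.unusedSectionVars false

section Aux

variable {G : Type*} [Group G] [MetricSpace G] [ProperSpace G]
  [IsTopologicalGroup G] [SecondCountableTopology G] [MeasurableSpace G] [BorelSpace G]

/-- A uniformly separated set meets a compact set in a finite set. -/
lemma st11_finite {r : ℝ} (hr : 0 < r) {s K : Set G} (hK : IsCompact K)
    (hs : ∀ x ∈ s, ∀ y ∈ s, x ≠ y → 2 * r ≤ dist x y) : (s ∩ K).Finite := by
  obtain ⟨t, -, htf, hcover⟩ := hK.finite_cover_balls (show (0:ℝ) < r by linarith)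
  have hsub : s ∩ K ⊆ ⋃ x ∈ t, s ∩ ball x r := by
    intro z hz
    obtain ⟨x, hx, hzx⟩ := Set.mem_iUnion₂.1 (hcover hz.2)
    exact Set.mem_iUnion₂.2 ⟨x, hx, hz.1, hzx⟩
  refine Set.Finite.subset (htf.biUnion fun x _ => ?_) hsub
  apply Set.Subsingleton.finite
  intro a ha b hb
  by_contra hne
  have h1 := hs a ha.1 b hb.1 hne
  have h2 : dist a b < 2 * r := by
    have hb' : dist b x < r := mem_ball.1 hb.2
    have ha' : dist a x < r := mem_ball.1 ha.2
    calc dist a b ≤ dist a x + dist x b := dist_triangle a x b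
    _ < r + r := by rw [dist_comm x b]; linarith
    _ = 2 * r := by ring
  linarith

/-- Uniform cardinality bound for separated sets in a compact set. -/
lemma st11_card_bound (hinv : ∀ g x y : G, dist (g * x) (g * y) = dist x y)
    (m : Measure G) [m.IsHaarMeasure] {r : ℝ} (hr : 0 < r) {K : Set G} (hK : IsCompact K) :
    ∃ N : ℕ, ∀ s : Set G, (∀ x ∈ s, ∀ y ∈ s, x ≠ y → 2 * r ≤ dist x y) →
      (s ∩ K).encard ≤ N := by
  classical
  set v : ℝ≥0∞ := m (ball (1 : G) r) with hv
  have hdist : ∀ x z : G, dist (x⁻¹ * z) (1 : G) = dist z x := by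
    intro x z
    have h := hinv x (x⁻¹ * z) 1
    simp only [mul_inv_cancel_left, mul_one] at h
    exact h.symm
  have hball_eq : ∀ x : G, m (ball x r) = v := by
    intro x
    have hpre : ball x r = (fun z => x⁻¹ * z) ⁻¹' ball (1 : G) r := by
      ext z
      simp only [Set.mem_preimage, mem_ball, hdist x z]
    rw [hpre, measure_preimage_mul]
  have hv0 : 0 < v := by
    rw [hv]; exact (isOpen_ball).measure_pos m (by simp [hr])
  have hvtop : v ≠ ∞ := by
    refine ne_of_lt (lt_of_le_of_lt (measure_mono ball_subset_closedBall) ?_)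
    exact (isCompact_closedBall (1:G) r).measure_lt_top
  have hM : m (cthickening r K) ≠ ∞ := (hK.cthickening).measure_lt_top.ne
  refine ⟨⌈(m (cthickening r K) / v).toReal⌉₊, ?_⟩
  intro s hs
  have hfin : (s ∩ K).Finite := st11_finite hr hK hs
  set F := hfin.toFinset with hF
  have hdisj : (F : Set G).PairwiseDisjoint (fun x => ball x r) := by
    intro a ha b hb hab
    apply ball_disjoint_ball
    rw [hF, Set.Finite.coe_toFinset] at ha hb
    calc r + r = 2 * r := by ring
    _ ≤ dist a b := hs a ha.1 b hb.1 hab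
  have hsub : ∀ x ∈ F, ball x r ⊆ cthickening r K := by
    intro x hx
    rw [hF, Set.Finite.mem_toFinset] at hx
    intro z hz
    exact mem_cthickening_of_dist_le z x r K hx.2 (le_of_lt (mem_ball.1 hz))
  have hcard : (F.card : ℝ≥0∞) * v ≤ m (cthickening r K) := by
    calc (F.card : ℝ≥0∞) * v = ∑ x ∈ F, m (ball x r) := by
          simp [hball_eq, Finset.sum_const, nsmul_eq_mul]
    _ = m (⋃ x ∈ F, ball x r) := (measure_biUnion_finset hdisj (fun x _ => measurableSet_ball)).symm
    _ ≤ m (cthickening r K) := measure_mono (Set.iUnion₂_subset hsub)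
  have hle : (F.card : ℝ≥0∞) ≤ m (cthickening r K) / v :=
    ENNReal.le_div_iff_mul_le (Or.inl hv0.ne') (Or.inl hvtop) |>.2 hcard
  have hDne : m (cthickening r K) / v ≠ ∞ := (ENNReal.div_lt_top hM hv0.ne').ne
  have hcardR : (F.card : ℝ) ≤ (m (cthickening r K) / v).toReal := by
    have := ENNReal.toReal_mono hDne hle
    simpa using this
  have hcardN : F.card ≤ ⌈(m (cthickening r K) / v).toReal⌉₊ := by
    exact_mod_cast hcardR.trans (Nat.le_ceil _)
  have hen : (s ∩ K).encard = (F.card : ℕ∞) := by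
    rw [hF, ← Set.encard_coe_eq_coe_finsetCard, Set.Finite.coe_toFinset]
  rw [hen]
  exact_mod_cast hcardN

end Aux

section Aux2

variable {G Ω : Type*} [Group G] [MetricSpace G] [ProperSpace G]
  [IsTopologicalGroup G] [SecondCountableTopology G] [MeasurableSpace G] [BorelSpace G]
  [MeasurableSpace Ω] {ℙ : Measure Ω} {Λ : Ω → Measure G} {P : Ω → Set G}

lemma st11_integrable_dirac {φ : G → ℝ} (hφ : Measurable φ) (x : G) :
    Integrable φ (Measure.dirac x) := by
  constructor
  · exact hφ.stronglyMeasurable.aestronglyMeasurable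
  · rw [HasFiniteIntegral, lintegral_dirac' x (by measurability)]
    exact coe_lt_top

/-- The point-process measure restricted to a compact set is a finite sum of Dirac masses. -/
lemma st11_restrict {Λ₀ : Measure G} {P₀ : Set G}
    (hcount₀ : ∀ B : Set G, MeasurableSet B → Λ₀ B = ((P₀ ∩ B).encard : ℝ≥0∞))
    {K : Set G} (hKm : MeasurableSet K) (hfin : (P₀ ∩ K).Finite) :
    Λ₀.restrict K = ∑ x ∈ hfin.toFinset, Measure.dirac x := by
  classical
  ext B hB
  rw [Measure.restrict_apply hB, hcount₀ _ (hB.inter hKm), Measure.finset_sum_apply]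
  have hset : P₀ ∩ (B ∩ K) = ↑(hfin.toFinset.filter (· ∈ B)) := by
    ext z
    simp only [Set.mem_inter_iff, Finset.coe_filter, Set.mem_setOf_eq,
      Set.Finite.mem_toFinset]
    tauto
  rw [hset, Set.encard_coe_eq_coe_finsetCard]
  have : ∀ x ∈ hfin.toFinset, Measure.dirac x B = if x ∈ B then 1 else 0 := by
    intro x _
    rw [Measure.dirac_apply' x hB]
    simp [Set.indicator_apply]
  rw [Finset.sum_congr rfl this, Finset.sum_boole]
  simp

lemma st11_rep {Λ₀ : Measure G} {P₀ : Set G}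
    (hcount₀ : ∀ B : Set G, MeasurableSet B → Λ₀ B = ((P₀ ∩ B).encard : ℝ≥0∞))
    {K : Set G} (hKm : MeasurableSet K) (hfin : (P₀ ∩ K).Finite)
    {φ : G → ℝ} (hφm : Measurable φ) (hsupp : support φ ⊆ K) :
    Integrable φ Λ₀ ∧ ∫ y, φ y ∂Λ₀ = ∑ x ∈ hfin.toFinset, φ x := by
  classical
  have hind : K.indicator φ = φ := Set.indicator_eq_self.2 hsupp
  have hres := st11_restrict hcount₀ hKm hfin
  have hint : Integrable φ (Λ₀.restrict K) := by
    rw [hres]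
    exact integrable_finset_sum_measure.2 fun x _ => st11_integrable_dirac hφm x
  have hint' : Integrable φ Λ₀ := by
    rw [← hind]
    exact (integrable_indicator_iff hKm).2 hint
  refine ⟨hint', ?_⟩
  calc ∫ y, φ y ∂Λ₀ = ∫ y, K.indicator φ y ∂Λ₀ := by rw [hind]
  _ = ∫ y in K, φ y ∂Λ₀ := integral_indicator hKm
  _ = ∑ x ∈ hfin.toFinset, ∫ y, φ y ∂(Measure.dirac x) := by
      rw [show Λ₀.restrict K = _ from hres]
      exact integral_finset_sum_measure fun i _ => st11_integrable_dirac hφm i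
  _ = ∑ x ∈ hfin.toFinset, φ x := by
      refine Finset.sum_congr rfl fun x _ => ?_
      exact integral_dirac φ x

/-- Uniform bound for integrals against the point-process measure. -/
lemma st11_int_bound {Λ₀ : Measure G} {P₀ : Set G}
    (hcount₀ : ∀ B : Set G, MeasurableSet B → Λ₀ B = ((P₀ ∩ B).encard : ℝ≥0∞))
    {K : Set G} (hKm : MeasurableSet K) (hfin : (P₀ ∩ K).Finite)
    {N : ℕ} (hN : (P₀ ∩ K).encard ≤ N)
    {φ : G → ℝ} (hφm : Measurable φ) (hsupp : support φ ⊆ K)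
    {C : ℝ} (hC : ∀ x, |φ x| ≤ C) :
    |∫ y, φ y ∂Λ₀| ≤ N * C := by
  classical
  rw [(st11_rep hcount₀ hKm hfin hφm hsupp).2]
  have hcard : (hfin.toFinset.card : ℝ) ≤ N := by
    have : ((hfin.toFinset.card : ℕ∞)) ≤ N := by
      rwa [← Set.encard_coe_eq_coe_finsetCard, Set.Finite.coe_toFinset]
    exact_mod_cast this
  have hC0 : 0 ≤ C := le_trans (abs_nonneg _) (hC 1)
  calc |∑ x ∈ hfin.toFinset, φ x| ≤ ∑ x ∈ hfin.toFinset, |φ x| :=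
        Finset.abs_sum_le_sum_abs _ _
  _ ≤ ∑ _x ∈ hfin.toFinset, C := Finset.sum_le_sum fun x _ => hC x
  _ = hfin.toFinset.card * C := by rw [Finset.sum_const, nsmul_eq_mul]
  _ ≤ N * C := by exact mul_le_mul_of_nonneg_right hcard hC0

/-- Measurability of linear statistics. -/
lemma st11_meas (hΛM : Measurable Λ)
    (hcount : ∀ ω (B : Set G), MeasurableSet B → Λ ω B = ((P ω ∩ B).encard : ℝ≥0∞))
    {K : Set G} (hKm : MeasurableSet K) (hfin : ∀ ω, (P ω ∩ K).Finite)
    {φ : G → ℝ} (hφm : Measurable φ) (hsupp : support φ ⊆ K) :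
    Measurable fun ω => ∫ y, φ y ∂Λ ω := by
  have hint : ∀ ω, Integrable φ (Λ ω) := fun ω =>
    (st11_rep (hcount ω) hKm (hfin ω) hφm hsupp).1
  have heq : (fun ω => ∫ y, φ y ∂Λ ω) = fun ω =>
      (∫⁻ y, ENNReal.ofReal (φ y) ∂Λ ω).toReal -
        (∫⁻ y, ENNReal.ofReal (-φ y) ∂Λ ω).toReal := by
    funext ω
    exact integral_eq_lintegral_pos_part_sub_lintegral_neg_part (hint ω)
  rw [heq]
  apply Measurable.sub
  · exact ((Measure.measurable_lintegral hφm.ennreal_ofReal).comp hΛM).ennreal_toReal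
  · exact ((Measure.measurable_lintegral hφm.neg.ennreal_ofReal).comp hΛM).ennreal_toReal

/-- Campbell's formula, nonnegative version. -/
lemma st11_campbell_nonneg [IsProbabilityMeasure ℙ] (hΛM : Measurable Λ)
    (m : Measure G) [m.IsHaarMeasure] (c : ℝ≥0)
    (hintensity : ∀ B : Set G, MeasurableSet B → ∫⁻ ω, Λ ω B ∂ℙ = c * m B)
    {φ : G → ℝ} (hφc : Continuous φ) (hφs : HasCompactSupport φ) (hφ0 : ∀ x, 0 ≤ φ x) :
    ∫ ω, (∫ y, φ y ∂Λ ω) ∂ℙ = c * ∫ x, φ x ∂m := by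
  set g : G → ℝ≥0∞ := fun y => ENNReal.ofReal (φ y) with hg
  have hgm : Measurable g := hφc.measurable.ennreal_ofReal
  have hbindm : ℙ.bind Λ = (c : ℝ≥0∞) • m := by
    ext B hB
    rw [Measure.bind_apply hB hΛM.aemeasurable, hintensity B hB, Measure.smul_apply,
      smul_eq_mul]
  have hlb : ∫⁻ ω, ∫⁻ y, g y ∂Λ ω ∂ℙ = c * ∫⁻ y, g y ∂m := by
    rw [← Measure.lintegral_bind hΛM.aemeasurable hgm.aemeasurable, hbindm, lintegral_smul_measure, smul_eq_mul]
  have hφint : Integrable φ m := hφc.integrable_of_hasCompactSupport hφs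
  have hgfin : ∫⁻ y, g y ∂m ≠ ∞ := by
    refine ne_of_lt (lt_of_le_of_lt (lintegral_mono fun y => ?_) hφint.2)
    exact Real.ofReal_le_enorm (φ y)
  set F : Ω → ℝ≥0∞ := fun ω => ∫⁻ y, g y ∂Λ ω with hF
  have hFm : Measurable F := (Measure.measurable_lintegral hgm).comp hΛM
  have hFfin : ∫⁻ ω, F ω ∂ℙ ≠ ∞ := by
    rw [hF, hlb]
    exact ENNReal.mul_ne_top coe_ne_top hgfin
  have haefin : ∀ᵐ ω ∂ℙ, F ω < ∞ := ae_lt_top hFm hFfin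
  have h1 : ∀ ω, ∫ y, φ y ∂Λ ω = (F ω).toReal := by
    intro ω
    rw [hF, hg]
    exact integral_eq_lintegral_of_nonneg_ae (ae_of_all _ hφ0)
      (hφc.measurable.stronglyMeasurable.aestronglyMeasurable)
  calc ∫ ω, (∫ y, φ y ∂Λ ω) ∂ℙ = ∫ ω, (F ω).toReal ∂ℙ := by simp_rw [h1]
  _ = (∫⁻ ω, F ω ∂ℙ).toReal := integral_toReal hFm.aemeasurable haefin
  _ = ((c : ℝ≥0∞) * ∫⁻ y, g y ∂m).toReal := by rw [hF, hlb]
  _ = c * (∫⁻ y, g y ∂m).toReal := by rw [ENNReal.toReal_mul, coe_toReal]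
  _ = c * ∫ x, φ x ∂m := by
      rw [← integral_eq_lintegral_of_nonneg_ae (ae_of_all _ hφ0)
        (hφc.measurable.stronglyMeasurable.aestronglyMeasurable)]

/-- Translation invariance of expectations. -/
lemma st11_Einv [MulAction G Ω] (hact : ∀ g : G, Measurable fun ω : Ω => g • ω)
    (hpres : ∀ g : G, MeasurePreserving (fun ω : Ω => g • ω) ℙ ℙ) (g : G) (F : Ω → ℝ) :
    ∫ ω, F (g • ω) ∂ℙ = ∫ ω, F ω ∂ℙ := by
  let e : Ω ≃ᵐ Ω :=
    { toFun := fun ω => g • ω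
      invFun := fun ω => g⁻¹ • ω
      left_inv := fun ω => inv_smul_smul g ω
      right_inv := fun ω => smul_inv_smul g ω
      measurable_toFun := hact g
      measurable_invFun := hact g⁻¹ }
  exact (hpres g).integral_comp e.measurableEmbedding F

/-- Stationarity of linear statistics. -/
lemma st11_stat [MulAction G Ω]
    (hequiv : ∀ (g : G) (ω : Ω), Λ (g • ω) = Measure.map (fun x => g * x) (Λ ω))
    (g : G) (ω : Ω) {φ : G → ℝ} (hφc : Continuous φ) :
    ∫ y, φ y ∂Λ (g • ω) = ∫ y, φ (g * y) ∂Λ ω := by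
  rw [hequiv g ω, integral_map (measurable_const_mul g).aemeasurable
    hφc.aestronglyMeasurable]


/-- A measurable, uniformly bounded function is integrable w.r.t. a probability measure. -/
lemma st11_integrable_of_bounded [IsProbabilityMeasure ℙ] {F : Ω → ℝ}
    (hFmeas : Measurable F) {C : ℝ} (hC : ∀ ω, |F ω| ≤ C) : Integrable F ℙ :=
  ⟨hFmeas.stronglyMeasurable.aestronglyMeasurable,
    HasFiniteIntegral.of_bounded (C := C) (ae_of_all _ fun ω => by
      rw [Real.norm_eq_abs]; exact hC ω)⟩

/-- Campbell's formula, signed version. -/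
lemma st11_campbell [IsProbabilityMeasure ℙ] (hΛM : Measurable Λ)
    (hcount : ∀ ω (B : Set G), MeasurableSet B → Λ ω B = ((P ω ∩ B).encard : ℝ≥0∞))
    (m : Measure G) [m.IsHaarMeasure] (c : ℝ≥0)
    (hintensity : ∀ B : Set G, MeasurableSet B → ∫⁻ ω, Λ ω B ∂ℙ = c * m B)
    {K : Set G} (hKm : MeasurableSet K) (hfin : ∀ ω, (P ω ∩ K).Finite)
    {N : ℕ} (hN : ∀ ω, (P ω ∩ K).encard ≤ N)
    {φ : G → ℝ} (hφc : Continuous φ) (hφs : HasCompactSupport φ) (hsupp : support φ ⊆ K) :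
    ∫ ω, (∫ y, φ y ∂Λ ω) ∂ℙ = c * ∫ x, φ x ∂m := by
  classical
  set φp : G → ℝ := fun x => max (φ x) 0 with hφp
  set φn : G → ℝ := fun x => max (-φ x) 0 with hφn
  have hφpc : Continuous φp := hφc.max continuous_const
  have hφnc : Continuous φn := hφc.neg.max continuous_const
  have hsp : support φp ⊆ K := by
    intro x hx
    apply hsupp
    rw [mem_support] at hx ⊢
    intro h0
    apply hx
    simp [hφp, h0]
  have hsn : support φn ⊆ K := by
    intro x hx
    apply hsupp
    rw [mem_support] at hx ⊢
    intro h0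
    apply hx
    simp [hφn, h0]
  have hφps : HasCompactSupport φp := hφs.comp_left (g := fun t => max t 0) (by simp)
  have hφns : HasCompactSupport φn := by
    have : φn = (fun t => max (-t) 0) ∘ φ := rfl
    rw [this]; exact hφs.comp_left (by simp)
  have hdiff : ∀ x, φ x = φp x - φn x := fun x =>
    (max_zero_sub_max_neg_zero_eq_self (φ x)).symm
  obtain ⟨Cp, hCp⟩ := hφpc.bounded_above_of_compact_support hφps
  obtain ⟨Cn, hCn⟩ := hφnc.bounded_above_of_compact_support hφns
  have hintp : ∀ ω, Integrable φp (Λ ω) := fun ω =>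
    (st11_rep (hcount ω) hKm (hfin ω) hφpc.measurable hsp).1
  have hintn : ∀ ω, Integrable φn (Λ ω) := fun ω =>
    (st11_rep (hcount ω) hKm (hfin ω) hφnc.measurable hsn).1
  have hsplit : ∀ ω, ∫ y, φ y ∂Λ ω = ∫ y, φp y ∂Λ ω - ∫ y, φn y ∂Λ ω := by
    intro ω
    rw [← integral_sub (hintp ω) (hintn ω)]
    exact integral_congr_ae (ae_of_all _ fun y => hdiff y)
  have hIp : Integrable (fun ω => ∫ y, φp y ∂Λ ω) ℙ :=
    st11_integrable_of_bounded
      (st11_meas hΛM hcount hKm hfin hφpc.measurable hsp)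
      (C := N * Cp) fun ω => st11_int_bound (hcount ω) hKm (hfin ω) (hN ω)
        hφpc.measurable hsp (fun x => by rw [← Real.norm_eq_abs]; exact hCp x)
  have hIn : Integrable (fun ω => ∫ y, φn y ∂Λ ω) ℙ :=
    st11_integrable_of_bounded
      (st11_meas hΛM hcount hKm hfin hφnc.measurable hsn)
      (C := N * Cn) fun ω => st11_int_bound (hcount ω) hKm (hfin ω) (hN ω)
        hφnc.measurable hsn (fun x => by rw [← Real.norm_eq_abs]; exact hCn x)
  have hmint : ∫ x, φ x ∂m = ∫ x, φp x ∂m - ∫ x, φn x ∂m := by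
    rw [← integral_sub (hφpc.integrable_of_hasCompactSupport hφps)
      (hφnc.integrable_of_hasCompactSupport hφns)]
    exact integral_congr_ae (ae_of_all _ fun y => hdiff y)
  calc ∫ ω, (∫ y, φ y ∂Λ ω) ∂ℙ
      = ∫ ω, ((∫ y, φp y ∂Λ ω) - ∫ y, φn y ∂Λ ω) ∂ℙ := by simp_rw [hsplit]
  _ = (∫ ω, (∫ y, φp y ∂Λ ω) ∂ℙ) - ∫ ω, (∫ y, φn y ∂Λ ω) ∂ℙ := integral_sub hIp hIn
  _ = c * ∫ x, φp x ∂m - c * ∫ x, φn x ∂m := by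
      rw [st11_campbell_nonneg hΛM m c hintensity hφpc hφps (fun x => le_max_right _ _),
        st11_campbell_nonneg hΛM m c hintensity hφnc hφns (fun x => le_max_right _ _)]
  _ = c * ∫ x, φ x ∂m := by rw [hmint]; ring


end Aux2
/-- Let `G` be a unimodular lcsc group with Haar measure `m`, equipped with
a proper left-invariant metric inducing its topology.  Let `Λ` be a `2r`-uniformly discrete
stationary point process with intensity `c > 0`.  If `h : G → ℝ` is continuous with compact
support, symmetric (`h(g⁻¹) = h(g)`), has `∫ h dm ≠ 0` and `(h ⋆ h)(g) ≤ 0` whenever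
`d(g, e) ≥ 2r`, then `c ≤ (∫ h² dm) / (∫ h dm)²`. -/
theorem statement11
    {G Ω : Type*} [Group G] [MetricSpace G] [ProperSpace G]
    [IsTopologicalGroup G] [SecondCountableTopology G]
    [MeasurableSpace G] [BorelSpace G]
    (hinv : ∀ g x y : G, dist (g * x) (g * y) = dist x y)
    (m : Measure G) [m.IsHaarMeasure] [m.IsMulRightInvariant]
    (r : ℝ) (hr : 0 < r)
    [MeasurableSpace Ω] (ℙ : Measure Ω) [IsProbabilityMeasure ℙ]
    [MulAction G Ω]
    (hact : ∀ g : G, Measurable fun ω : Ω => g • ω)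
    (hpres : ∀ g : G, MeasurePreserving (fun ω : Ω => g • ω) ℙ ℙ)
    (Λ : Ω → Measure G)
    (hΛmeas : ∀ B : Set G, MeasurableSet B → Measurable fun ω => Λ ω B)
    (hequiv : ∀ (g : G) (ω : Ω), Λ (g • ω) = Measure.map (fun x => g * x) (Λ ω))
    (P : Ω → Set G)
    (hsep : ∀ ω : Ω, ∀ x ∈ P ω, ∀ y ∈ P ω, x ≠ y → 2 * r ≤ dist x y)
    (hcount : ∀ (ω : Ω) (B : Set G), MeasurableSet B → Λ ω B = ((P ω ∩ B).encard : ℝ≥0∞))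
    (c : ℝ≥0) (hc : 0 < c)
    (hintensity : ∀ B : Set G, MeasurableSet B → ∫⁻ ω, Λ ω B ∂ℙ = c * m B)
    (h : G → ℝ) (hh_cont : Continuous h) (hh_supp : HasCompactSupport h)
    (hh_symm : ∀ g : G, h g⁻¹ = h g)
    (hh_int : ∫ x, h x ∂m ≠ 0)
    (hh_conv : ∀ g : G, 2 * r ≤ dist g 1 → (∫ t, h t * h (t⁻¹ * g) ∂m) ≤ 0) :
    (c : ℝ) ≤ (∫ x, (h x) ^ 2 ∂m) / (∫ x, h x ∂m) ^ 2 := by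
  classical
  have hΛM : Measurable Λ := Measure.measurable_of_measurable_coe Λ hΛmeas
  have hhm : Measurable h := hh_cont.measurable
  set I : ℝ := ∫ x, h x ∂m with hI
  set J : ℝ := ∫ x, (h x) ^ 2 ∂m with hJ
  set w : G → ℝ := fun x => h x ^ 2 with hw
  have hwc : Continuous w := hh_cont.pow 2
  have hws : HasCompactSupport w := hh_supp.comp_left (g := fun t : ℝ => t ^ 2) (by simp)
  have hwnn : ∀ x, 0 ≤ w x := fun x => sq_nonneg _
  have hJw : ∫ x, w x ∂m = J := rfl
  have hsupp_w_eq : support w = support h := by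
    ext x
    simp only [mem_support, hw]
    constructor
    · intro hx h0
      exact hx (by simp [h0])
    · intro hx h0
      exact hx (sq_eq_zero_iff.1 h0)
  have hsupp_w : support w ⊆ support h := hsupp_w_eq.subset
  -- compact sets
  set K₁ : Set G := tsupport h with hK₁
  have hK₁c : IsCompact K₁ := hh_supp
  have hK₁m : MeasurableSet K₁ := hK₁c.isClosed.measurableSet
  have hhK₁ : support h ⊆ K₁ := subset_tsupport h
  have hwK₁ : support w ⊆ K₁ := hsupp_w.trans hhK₁
  set T₀ : Set G := K₁ * K₁⁻¹ with hT₀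
  have hT₀c : IsCompact T₀ := hK₁c.mul hK₁c.inv
  have hT₀m : MeasurableSet T₀ := hT₀c.isClosed.measurableSet
  have hT₀fin : m T₀ < ∞ := hT₀c.measure_lt_top
  set K₂ : Set G := T₀ * K₁ with hK₂
  have hK₂c : IsCompact K₂ := hT₀c.mul hK₁c
  -- cutoff function χ
  obtain ⟨χ₀, hχeq, -, hχsupp, hχmem⟩ :=
    exists_continuous_one_zero_of_isCompact (hK₂c.union hK₁c) isClosed_empty
      (Set.disjoint_empty _)
  set χ : G → ℝ := ⇑χ₀ with hχdef
  have hχc : Continuous χ := χ₀.continuous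
  set Kχ : Set G := tsupport χ with hKχ
  have hKχc : IsCompact Kχ := hχsupp
  have hKχm : MeasurableSet Kχ := hKχc.isClosed.measurableSet
  have hχ1 : ∀ x ∈ K₂ ∪ K₁, χ x = 1 := fun x hx => hχeq hx
  have hχ0 : ∀ x, 0 ≤ χ x := fun x => (hχmem x).1
  have hχle1 : ∀ x, χ x ≤ 1 := fun x => (hχmem x).2
  have hχKχ : support χ ⊆ Kχ := subset_tsupport χ
  have hK₁Kχ : K₁ ⊆ Kχ := by
    intro x hx
    apply subset_tsupport χ
    rw [mem_support, hχ1 x (Or.inr hx)]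
    exact one_ne_zero
  -- finiteness and counting bounds
  have hfin₁ : ∀ ω, (P ω ∩ K₁).Finite := fun ω => st11_finite hr hK₁c (hsep ω)
  have hfinχ : ∀ ω, (P ω ∩ Kχ).Finite := fun ω => st11_finite hr hKχc (hsep ω)
  obtain ⟨N₁, hN₁⟩ := st11_card_bound hinv m hr hK₁c
  obtain ⟨Nχ, hNχ⟩ := st11_card_bound hinv m hr hKχc
  have hN₁' : ∀ ω, (P ω ∩ K₁).encard ≤ N₁ := fun ω => hN₁ _ (hsep ω)
  have hNχ' : ∀ ω, (P ω ∩ Kχ).encard ≤ Nχ := fun ω => hNχ _ (hsep ω)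
  obtain ⟨Ch, hCh⟩ := hh_cont.bounded_above_of_compact_support hh_supp
  obtain ⟨Cw, hCw⟩ := hwc.bounded_above_of_compact_support hws
  have hCh' : ∀ x, |h x| ≤ Ch := fun x => by rw [← Real.norm_eq_abs]; exact hCh x
  have hCw' : ∀ x, |w x| ≤ Cw := fun x => by rw [← Real.norm_eq_abs]; exact hCw x
  have hCh0 : 0 ≤ Ch := le_trans (abs_nonneg _) (hCh' 1)
  have hCw0 : 0 ≤ Cw := le_trans (abs_nonneg _) (hCw' 1)
  -- finite point configurations
  set F₁ : Ω → Finset G := fun ω => (hfin₁ ω).toFinset with hF₁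
  set Fχ : Ω → Finset G := fun ω => (hfinχ ω).toFinset with hFχ
  have hF₁mem : ∀ ω x, x ∈ F₁ ω ↔ x ∈ P ω ∧ x ∈ K₁ := fun ω x => (hfin₁ ω).mem_toFinset
  have hFχmem : ∀ ω x, x ∈ Fχ ω ↔ x ∈ P ω ∧ x ∈ Kχ := fun ω x => (hfinχ ω).mem_toFinset
  have hF₁Fχ : ∀ ω, F₁ ω ⊆ Fχ ω := by
    intro ω x hx
    rw [hF₁mem] at hx
    rw [hFχmem]
    exact ⟨hx.1, hK₁Kχ hx.2⟩
  -- the linear statistics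
  set Xh : Ω → ℝ := fun ω => ∫ y, h y ∂Λ ω with hXh
  set Xw : Ω → ℝ := fun ω => ∫ y, w y ∂Λ ω with hXw
  set u₁ : G → Ω → ℝ := fun t ω => ∫ y, w y * h (t⁻¹ * y) ∂Λ ω with hu₁
  set u₂ : G → Ω → ℝ := fun t ω => ∫ y, χ y * h (t⁻¹ * y) ∂Λ ω with hu₂
  set v₁ : G → Ω → ℝ := fun t ω => ∫ y, w (t * y) * h y ∂Λ ω with hv₁
  -- continuity/measurability of the integrands
  have hmu₁ : ∀ t : G, Measurable fun y => w y * h (t⁻¹ * y) := fun t =>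
    (hwc.mul (hh_cont.comp (continuous_mul_left t⁻¹))).measurable
  have hmu₂ : ∀ t : G, Measurable fun y => χ y * h (t⁻¹ * y) := fun t =>
    (hχc.mul (hh_cont.comp (continuous_mul_left t⁻¹))).measurable
  have hmv₁ : ∀ t : G, Measurable fun y => w (t * y) * h y := fun t =>
    ((hwc.comp (continuous_mul_left t)).mul hh_cont).measurable
  -- supports of the integrands
  have hsu₁ : ∀ t : G, support (fun y => w y * h (t⁻¹ * y)) ⊆ K₁ := by
    intro t y hy
    rw [mem_support] at hy
    refine hwK₁ (mem_support.2 fun h0 => hy ?_)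
    rw [h0, zero_mul]
  have hsu₂ : ∀ t : G, support (fun y => χ y * h (t⁻¹ * y)) ⊆ Kχ := by
    intro t y hy
    rw [mem_support] at hy
    refine hχKχ (mem_support.2 fun h0 => hy ?_)
    rw [h0, zero_mul]
  have hsv₁ : ∀ t : G, support (fun y => w (t * y) * h y) ⊆ K₁ := by
    intro t y hy
    rw [mem_support] at hy
    refine hhK₁ (mem_support.2 fun h0 => hy ?_)
    rw [h0, mul_zero]
  -- finite-sum representations
  have hu₁rep : ∀ t ω, u₁ t ω = ∑ x ∈ F₁ ω, w x * h (t⁻¹ * x) := fun t ω =>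
    (st11_rep (hcount ω) hK₁m (hfin₁ ω) (hmu₁ t) (hsu₁ t)).2
  have hu₂rep : ∀ t ω, u₂ t ω = ∑ x ∈ Fχ ω, χ x * h (t⁻¹ * x) := fun t ω =>
    (st11_rep (hcount ω) hKχm (hfinχ ω) (hmu₂ t) (hsu₂ t)).2
  have hv₁rep : ∀ t ω, v₁ t ω = ∑ x ∈ F₁ ω, w (t * x) * h x := fun t ω =>
    (st11_rep (hcount ω) hK₁m (hfin₁ ω) (hmv₁ t) (hsv₁ t)).2
  have hXhrep : ∀ ω, Xh ω = ∑ x ∈ F₁ ω, h x := fun ω =>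
    (st11_rep (hcount ω) hK₁m (hfin₁ ω) hhm hhK₁).2
  have hXwrep : ∀ ω, Xw ω = ∑ x ∈ F₁ ω, w x := fun ω =>
    (st11_rep (hcount ω) hK₁m (hfin₁ ω) hwc.measurable hwK₁).2
  -- measurability in ω
  have hMu₁ : ∀ t, Measurable (u₁ t) := fun t =>
    st11_meas hΛM hcount hK₁m hfin₁ (hmu₁ t) (hsu₁ t)
  have hMu₂ : ∀ t, Measurable (u₂ t) := fun t =>
    st11_meas hΛM hcount hKχm hfinχ (hmu₂ t) (hsu₂ t)
  have hMv₁ : ∀ t, Measurable (v₁ t) := fun t =>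
    st11_meas hΛM hcount hK₁m hfin₁ (hmv₁ t) (hsv₁ t)
  have hMXh : Measurable Xh := st11_meas hΛM hcount hK₁m hfin₁ hhm hhK₁
  have hMXw : Measurable Xw := st11_meas hΛM hcount hK₁m hfin₁ hwc.measurable hwK₁
  -- uniform bounds
  have hDu₁ : ∀ t ω, |u₁ t ω| ≤ N₁ * (Cw * Ch) := fun t ω =>
    st11_int_bound (hcount ω) hK₁m (hfin₁ ω) (hN₁' ω) (hmu₁ t) (hsu₁ t) (fun x => by
      rw [abs_mul]
      exact mul_le_mul (hCw' _) (hCh' _) (abs_nonneg _) hCw0)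
  have hDu₂ : ∀ t ω, |u₂ t ω| ≤ Nχ * Ch := fun t ω =>
    st11_int_bound (hcount ω) hKχm (hfinχ ω) (hNχ' ω) (hmu₂ t) (hsu₂ t) (fun x => by
      rw [abs_mul]
      calc |χ x| * |h (t⁻¹ * x)| ≤ 1 * Ch := by
            refine mul_le_mul ?_ (hCh' _) (abs_nonneg _) zero_le_one
            rw [abs_of_nonneg (hχ0 x)]
            exact hχle1 x
      _ = Ch := one_mul Ch)
  have hDv₁ : ∀ t ω, |v₁ t ω| ≤ N₁ * (Cw * Ch) := fun t ω =>
    st11_int_bound (hcount ω) hK₁m (hfin₁ ω) (hN₁' ω) (hmv₁ t) (hsv₁ t) (fun x => by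
      rw [abs_mul]
      exact mul_le_mul (hCw' _) (hCh' _) (abs_nonneg _) hCw0)
  have hDXh : ∀ ω, |Xh ω| ≤ N₁ * Ch := fun ω =>
    st11_int_bound (hcount ω) hK₁m (hfin₁ ω) (hN₁' ω) hhm hhK₁ hCh'
  have hDXw : ∀ ω, |Xw ω| ≤ N₁ * Cw := fun ω =>
    st11_int_bound (hcount ω) hK₁m (hfin₁ ω) (hN₁' ω) hwc.measurable hwK₁ hCw'
  -- vanishing off T₀
  have hzero₁ : ∀ t, t ∉ T₀ → ∀ y, w y * h (t⁻¹ * y) = 0 := by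
    intro t ht y
    by_contra hy
    apply ht
    have hwy : w y ≠ 0 := fun h0 => hy (by rw [h0, zero_mul])
    have hhy : h (t⁻¹ * y) ≠ 0 := fun h0 => hy (by rw [h0, mul_zero])
    have h1 : y ∈ K₁ := hwK₁ (mem_support.2 hwy)
    have h2 : t⁻¹ * y ∈ K₁ := hhK₁ (mem_support.2 hhy)
    have : t = y * (t⁻¹ * y)⁻¹ := by group
    rw [this, hT₀]
    exact Set.mul_mem_mul h1 (Set.inv_mem_inv.2 h2)
  have hzero_v : ∀ t, t ∉ T₀ → ∀ y, w (t * y) * h y = 0 := by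
    intro t ht y
    by_contra hy
    apply ht
    have hwy : w (t * y) ≠ 0 := fun h0 => hy (by rw [h0, zero_mul])
    have hhy : h y ≠ 0 := fun h0 => hy (by rw [h0, mul_zero])
    have h1 : t * y ∈ K₁ := hwK₁ (mem_support.2 hwy)
    have h2 : y ∈ K₁ := hhK₁ (mem_support.2 hhy)
    have : t = (t * y) * y⁻¹ := by group
    rw [this, hT₀]
    exact Set.mul_mem_mul h1 (Set.inv_mem_inv.2 h2)
  have hu₁zero : ∀ t, t ∉ T₀ → ∀ ω, u₁ t ω = 0 := by
    intro t ht ω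
    show (∫ y, w y * h (t⁻¹ * y) ∂Λ ω) = 0
    rw [show (fun y => w y * h (t⁻¹ * y)) = fun _ => (0 : ℝ) from funext (hzero₁ t ht)]
    simp
  have hv₁zero : ∀ t, t ∉ T₀ → ∀ ω, v₁ t ω = 0 := by
    intro t ht ω
    show (∫ y, w (t * y) * h y ∂Λ ω) = 0
    rw [show (fun y => w (t * y) * h y) = fun _ => (0 : ℝ) from funext (hzero_v t ht)]
    simp
  -- continuity in t of the statistics
  have hCu : ∀ ω, Continuous fun t => u₁ t ω * u₂ t ω := by
    intro ω
    have h1 : (fun t => u₁ t ω) = fun t => ∑ x ∈ F₁ ω, w x * h (t⁻¹ * x) := by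
      funext t; exact hu₁rep t ω
    have h2 : (fun t => u₂ t ω) = fun t => ∑ x ∈ Fχ ω, χ x * h (t⁻¹ * x) := by
      funext t; exact hu₂rep t ω
    have c1 : Continuous fun t => u₁ t ω := by
      rw [h1]
      refine continuous_finset_sum _ fun x _ => ?_
      exact continuous_const.mul (hh_cont.comp ((continuous_inv.mul continuous_const)))
    have c2 : Continuous fun t => u₂ t ω := by
      rw [h2]
      refine continuous_finset_sum _ fun x _ => ?_
      exact continuous_const.mul (hh_cont.comp ((continuous_inv.mul continuous_const)))
    exact c1.mul c2
  have hCv : ∀ ω, Continuous fun t => v₁ t ω * Xh ω := by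
    intro ω
    have h1 : (fun t => v₁ t ω) = fun t => ∑ x ∈ F₁ ω, w (t * x) * h x := by
      funext t; exact hv₁rep t ω
    have c1 : Continuous fun t => v₁ t ω := by
      rw [h1]
      refine continuous_finset_sum _ fun x _ => ?_
      exact ((hwc.comp (continuous_mul_right x)).mul continuous_const)
    exact c1.mul continuous_const
  -- joint measurability
  have hMJu : Measurable (uncurry fun t ω => u₁ t ω * u₂ t ω) :=
    measurable_uncurry_of_continuous_of_measurable hCu (fun t => (hMu₁ t).mul (hMu₂ t))
  have hMJv : Measurable (uncurry fun t ω => v₁ t ω * Xh ω) :=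
    measurable_uncurry_of_continuous_of_measurable hCv (fun t => (hMv₁ t).mul hMXh)
  -- integrability on the product spaces
  set D₁ : ℝ := (N₁ * (Cw * Ch)) * (Nχ * Ch) with hD₁
  have hIprod₁ : Integrable (uncurry fun (ω : Ω) (t : G) => u₁ t ω * u₂ t ω) (ℙ.prod m) := by
    have hBint : Integrable (fun p : Ω × G => (fun _ : Ω => (1:ℝ)) p.1 *
        (T₀.indicator (fun _ => D₁) p.2)) (ℙ.prod m) := by
      refine (integrable_const (1:ℝ)).mul_prod ?_
      rw [integrable_indicator_iff hT₀m]
      exact integrableOn_const hT₀fin.ne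
    refine hBint.mono' ?_ (ae_of_all _ fun p => ?_)
    · exact (hMJu.comp measurable_swap).stronglyMeasurable.aestronglyMeasurable
    · simp only [uncurry, one_mul]
      by_cases hp : p.2 ∈ T₀
      · rw [Set.indicator_of_mem hp, Real.norm_eq_abs, abs_mul, hD₁]
        exact mul_le_mul (hDu₁ _ _) (hDu₂ _ _) (abs_nonneg _)
          (mul_nonneg (Nat.cast_nonneg _) (mul_nonneg hCw0 hCh0))
      · rw [Set.indicator_of_notMem hp, Real.norm_eq_abs, hu₁zero _ hp, zero_mul, abs_zero]
  have hIprod₂ : Integrable (uncurry fun (t : G) (ω : Ω) => v₁ t ω * Xh ω) (m.prod ℙ) := by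
    set D₂ : ℝ := (N₁ * (Cw * Ch)) * (N₁ * Ch) with hD₂
    have hBint : Integrable (fun p : G × Ω => (T₀.indicator (fun _ => D₂) p.1) *
        (fun _ : Ω => (1:ℝ)) p.2) (m.prod ℙ) := by
      refine Integrable.mul_prod ?_ (integrable_const (1:ℝ))
      rw [integrable_indicator_iff hT₀m]
      exact integrableOn_const hT₀fin.ne
    refine hBint.mono' hMJv.stronglyMeasurable.aestronglyMeasurable (ae_of_all _ fun p => ?_)
    simp only [uncurry, mul_one]
    by_cases hp : p.1 ∈ T₀
    · rw [Set.indicator_of_mem hp, Real.norm_eq_abs, abs_mul, hD₂]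
      exact mul_le_mul (hDv₁ _ _) (hDXh _) (abs_nonneg _)
        (mul_nonneg (Nat.cast_nonneg _) (mul_nonneg hCw0 hCh0))
    · rw [Set.indicator_of_notMem hp, Real.norm_eq_abs, hv₁zero _ hp, zero_mul, abs_zero]
  -- Fubini 1
  have hFub₁ : ∫ ω, (∫ t, u₁ t ω * u₂ t ω ∂m) ∂ℙ = ∫ t, (∫ ω, u₁ t ω * u₂ t ω ∂ℙ) ∂m :=
    integral_integral_swap hIprod₁
  -- stationarity step
  have hStep : ∀ t, ∫ ω, u₁ t ω * u₂ t ω ∂ℙ = ∫ ω, v₁ t ω * Xh ω ∂ℙ := by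
    intro t
    by_cases hT : t ∈ T₀
    · have hE : ∫ ω, u₁ t (t • ω) * u₂ t (t • ω) ∂ℙ = ∫ ω, u₁ t ω * u₂ t ω ∂ℙ :=
        st11_Einv (ℙ := ℙ) hact hpres t (fun ω => u₁ t ω * u₂ t ω)
      rw [← hE]
      refine integral_congr_ae (ae_of_all _ fun ω => ?_)
      show u₁ t (t • ω) * u₂ t (t • ω) = v₁ t ω * Xh ω
      have e₁ : u₁ t (t • ω) = v₁ t ω := by
        have hst := st11_stat (Λ := Λ) hequiv t ω
          (φ := fun y => w y * h (t⁻¹ * y))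
          (hwc.mul (hh_cont.comp (continuous_mul_left t⁻¹)))
        calc u₁ t (t • ω) = ∫ y, w (t * y) * h (t⁻¹ * (t * y)) ∂Λ ω := hst
        _ = v₁ t ω := by
            show _ = (∫ y, w (t * y) * h y ∂Λ ω)
            congr 1
            funext y
            rw [inv_mul_cancel_left]
      have e₂ : u₂ t (t • ω) = Xh ω := by
        have hst := st11_stat (Λ := Λ) hequiv t ω
          (φ := fun y => χ y * h (t⁻¹ * y))
          (hχc.mul (hh_cont.comp (continuous_mul_left t⁻¹)))
        calc u₂ t (t • ω) = ∫ y, χ (t * y) * h (t⁻¹ * (t * y)) ∂Λ ω := hst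
        _ = Xh ω := by
            show _ = (∫ y, h y ∂Λ ω)
            congr 1
            funext y
            rw [inv_mul_cancel_left]
            by_cases hy : h y = 0
            · rw [hy, mul_zero]
            · have hyK : y ∈ K₁ := hhK₁ (mem_support.2 hy)
              have hty : t * y ∈ K₂ := Set.mul_mem_mul hT hyK
              rw [hχ1 _ (Or.inl hty), one_mul]
      rw [e₁, e₂]
    · have hL : ∀ ω, u₁ t ω * u₂ t ω = 0 := fun ω => by
        rw [hu₁zero t hT ω, zero_mul]
      have hR : ∀ ω, v₁ t ω * Xh ω = 0 := fun ω => by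
        rw [hv₁zero t hT ω, zero_mul]
      simp only [hL, hR]
  -- Fubini 2
  have hFub₂ : ∫ t, (∫ ω, v₁ t ω * Xh ω ∂ℙ) ∂m = ∫ ω, (∫ t, v₁ t ω * Xh ω ∂m) ∂ℙ :=
    integral_integral_swap hIprod₂
  -- inner t-integral
  have hInner : ∀ ω, ∫ t, v₁ t ω * Xh ω ∂m = J * (Xh ω * Xh ω) := by
    intro ω
    have hv₁int : ∫ t, v₁ t ω ∂m = J * Xh ω := by
      have hrepfun : (fun t => v₁ t ω) = fun t => ∑ x ∈ F₁ ω, w (t * x) * h x := by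
        funext t; exact hv₁rep t ω
      rw [hrepfun]
      have hterm : ∀ x ∈ F₁ ω, Integrable (fun t => w (t * x) * h x) m := by
        intro x _
        refine Integrable.mul_const ?_ (h x)
        refine (hwc.comp (continuous_mul_right x)).integrable_of_hasCompactSupport ?_
        exact hws.comp_homeomorph (Homeomorph.mulRight x)
      rw [integral_finset_sum _ hterm]
      have : ∀ x ∈ F₁ ω, ∫ t, w (t * x) * h x ∂m = J * h x := by
        intro x _
        rw [integral_mul_const]
        congr 1
        rw [← hJw]
        exact integral_mul_right_eq_self w x
      rw [Finset.sum_congr rfl this, ← Finset.mul_sum, ← hXhrep]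
    rw [integral_mul_const, hv₁int, mul_assoc]
  -- the convolution function
  set conv : G → ℝ := fun g => ∫ t, h t * h (t⁻¹ * g) ∂m with hconv
  have hconv_core : ∀ x y : G, ∫ t, h (t⁻¹ * x) * h (t⁻¹ * y) ∂m = conv (x⁻¹ * y) := by
    intro x y
    have hself := integral_mul_left_eq_self (μ := m)
      (f := fun t => h (t⁻¹ * x) * h (t⁻¹ * y)) x
    rw [← hself, hconv]
    simp only
    congr 1
    funext t
    have e1 : (x * t)⁻¹ * x = t⁻¹ := by group
    have e2 : (x * t)⁻¹ * y = t⁻¹ * (x⁻¹ * y) := by group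
    rw [e1, e2, hh_symm t]
  have hconv1 : conv 1 = J := by
    rw [← hJw]
    show (∫ t, h t * h (t⁻¹ * 1) ∂m) = ∫ x, w x ∂m
    congr 1
    funext t
    rw [mul_one, hh_symm t]
    simp only [hw]
    ring
  have hconv_le : ∀ ω, ∀ x ∈ P ω, ∀ y ∈ P ω, x ≠ y → conv (x⁻¹ * y) ≤ 0 := by
    intro ω x hx y hy hxy
    apply hh_conv
    have hd : dist (x * (x⁻¹ * y)) (x * 1) = dist (x⁻¹ * y) 1 := hinv x _ _
    rw [mul_inv_cancel_left, mul_one] at hd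
    rw [← hd, dist_comm]
    exact hsep ω x hx y hy hxy
  -- pointwise upper bound
  have hUpper : ∀ ω, (∫ t, u₁ t ω * u₂ t ω ∂m) ≤ J * Xw ω := by
    intro ω
    have hrepfun : (fun t => u₁ t ω * u₂ t ω) =
        fun t => ∑ x ∈ F₁ ω, ∑ y ∈ Fχ ω, (w x * h (t⁻¹ * x)) * (χ y * h (t⁻¹ * y)) := by
      funext t
      rw [hu₁rep t ω, hu₂rep t ω, Finset.sum_mul_sum]
    have hterm_int : ∀ (x y : G), Integrable
        (fun t => (w x * h (t⁻¹ * x)) * (χ y * h (t⁻¹ * y))) m := by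
      intro x y
      have hc : Continuous fun t : G => (w x * h (t⁻¹ * x)) * (χ y * h (t⁻¹ * y)) := by
        refine (continuous_const.mul (hh_cont.comp (continuous_inv.mul continuous_const))).mul
          (continuous_const.mul (hh_cont.comp (continuous_inv.mul continuous_const)))
      refine hc.integrable_of_hasCompactSupport ?_
      refine HasCompactSupport.intro (K := ({x} : Set G) * K₁⁻¹)
        ((isCompact_singleton).mul hK₁c.inv) ?_
      intro t ht
      have : h (t⁻¹ * x) = 0 := by
        by_contra hne
        apply ht
        have h2 : t⁻¹ * x ∈ K₁ := hhK₁ (mem_support.2 hne)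
        have : t = x * (t⁻¹ * x)⁻¹ := by group
        rw [this]
        exact Set.mul_mem_mul (Set.mem_singleton x) (Set.inv_mem_inv.2 h2)
      rw [this, mul_zero, zero_mul]
    have hterm_val : ∀ (x y : G), ∫ t, (w x * h (t⁻¹ * x)) * (χ y * h (t⁻¹ * y)) ∂m
        = (w x * χ y) * conv (x⁻¹ * y) := by
      intro x y
      have : (fun t => (w x * h (t⁻¹ * x)) * (χ y * h (t⁻¹ * y))) =
          fun t => (w x * χ y) * (h (t⁻¹ * x) * h (t⁻¹ * y)) := by
        funext t; ring
      rw [this, integral_const_mul, hconv_core x y]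
    have hA : ∫ t, u₁ t ω * u₂ t ω ∂m =
        ∑ x ∈ F₁ ω, ∑ y ∈ Fχ ω, (w x * χ y) * conv (x⁻¹ * y) := by
      rw [hrepfun]
      rw [integral_finset_sum _ (fun x _ => integrable_finset_sum _ (fun y _ => hterm_int x y))]
      refine Finset.sum_congr rfl fun x _ => ?_
      rw [integral_finset_sum _ (fun y _ => hterm_int x y)]
      exact Finset.sum_congr rfl fun y _ => hterm_val x y
    rw [hA]
    have hrow : ∀ x ∈ F₁ ω, ∑ y ∈ Fχ ω, (w x * χ y) * conv (x⁻¹ * y) ≤ w x * J := by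
      intro x hx
      have hxFχ : x ∈ Fχ ω := hF₁Fχ ω hx
      have hxP : x ∈ P ω := ((hfin₁ ω).mem_toFinset.1 hx).1
      have hxK₁ : x ∈ K₁ := ((hfin₁ ω).mem_toFinset.1 hx).2
      rw [← Finset.add_sum_erase _ _ hxFχ]
      have hdiag : (w x * χ x) * conv (x⁻¹ * x) = w x * J := by
        rw [inv_mul_cancel, hconv1, hχ1 x (Or.inr hxK₁), mul_one]
      rw [hdiag]
      have hrest : ∑ y ∈ (Fχ ω).erase x, (w x * χ y) * conv (x⁻¹ * y) ≤ 0 := by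
        refine Finset.sum_nonpos fun y hy => ?_
        have hyP : y ∈ P ω := ((hfinχ ω).mem_toFinset.1 (Finset.mem_of_mem_erase hy)).1
        have hyx : y ≠ x := Finset.ne_of_mem_erase hy
        refine mul_nonpos_of_nonneg_of_nonpos (mul_nonneg (hwnn x) (hχ0 y)) ?_
        exact hconv_le ω x hxP y hyP (Ne.symm hyx)
      linarith
    calc ∑ x ∈ F₁ ω, ∑ y ∈ Fχ ω, (w x * χ y) * conv (x⁻¹ * y)
        ≤ ∑ x ∈ F₁ ω, w x * J := Finset.sum_le_sum hrow
    _ = (∑ x ∈ F₁ ω, w x) * J := by rw [Finset.sum_mul]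
    _ = Xw ω * J := by rw [← hXwrep]
    _ = J * Xw ω := mul_comm _ _
  -- Campbell's formulas
  have hCamh : ∫ ω, Xh ω ∂ℙ = c * I := by
    rw [hI]
    exact st11_campbell hΛM hcount m c hintensity hK₁m hfin₁ hN₁' hh_cont hh_supp hhK₁
  have hCamw : ∫ ω, Xw ω ∂ℙ = c * J := by
    rw [hJ]
    exact st11_campbell hΛM hcount m c hintensity hK₁m hfin₁ hN₁' hwc hws hwK₁
  -- integrability over ℙ
  have hIA : Integrable (fun ω => ∫ t, u₁ t ω * u₂ t ω ∂m) ℙ := hIprod₁.integral_prod_left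
  have hIXw : Integrable Xw ℙ := st11_integrable_of_bounded hMXw hDXw
  have hIXh2 : Integrable (fun ω => Xh ω * Xh ω) ℙ :=
    st11_integrable_of_bounded (hMXh.mul hMXh) (C := (N₁ * Ch) * (N₁ * Ch)) fun ω => by
      rw [abs_mul]
      exact mul_le_mul (hDXh ω) (hDXh ω) (abs_nonneg _)
        (mul_nonneg (Nat.cast_nonneg _) hCh0)
  -- chain of (in)equalities
  have hchain1 : ∫ ω, (∫ t, u₁ t ω * u₂ t ω ∂m) ∂ℙ = J * ∫ ω, Xh ω * Xh ω ∂ℙ := by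
    rw [hFub₁]
    have : (fun t => ∫ ω, u₁ t ω * u₂ t ω ∂ℙ) = fun t => ∫ ω, v₁ t ω * Xh ω ∂ℙ := by
      funext t; exact hStep t
    rw [this, hFub₂]
    have : (fun ω => ∫ t, v₁ t ω * Xh ω ∂m) = fun ω => J * (Xh ω * Xh ω) := by
      funext ω; exact hInner ω
    rw [this, integral_const_mul]
  have hchain2 : ∫ ω, (∫ t, u₁ t ω * u₂ t ω ∂m) ∂ℙ ≤ J * (c * J) := by
    calc ∫ ω, (∫ t, u₁ t ω * u₂ t ω ∂m) ∂ℙ ≤ ∫ ω, J * Xw ω ∂ℙ := by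
          refine integral_mono hIA (hIXw.const_mul J) fun ω => hUpper ω
    _ = J * ∫ ω, Xw ω ∂ℙ := integral_const_mul J _
    _ = J * (c * J) := by rw [hCamw]
  -- positivity of J
  have hsupp_ne : (support h).Nonempty := by
    rcases Set.eq_empty_or_nonempty (support h) with he | hne
    · exfalso
      apply hh_int
      rw [hI]
      have hzero : ∀ x, h x = 0 := fun x => by
        by_contra h0
        exact (Set.eq_empty_iff_forall_notMem.1 he x) (mem_support.2 h0)
      simp [hzero]
    · exact hne
  have hJpos : 0 < J := by
    rw [← hJw]
    rw [integral_pos_iff_support_of_nonneg hwnn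
      (hwc.integrable_of_hasCompactSupport hws)]
    rw [hsupp_w_eq]
    exact (hh_cont.isOpen_support).measure_pos m hsupp_ne
  have hEX2 : ∫ ω, Xh ω * Xh ω ∂ℙ ≤ c * J := by
    have h' : J * ∫ ω, Xh ω * Xh ω ∂ℙ ≤ J * (c * J) := by
      rw [← hchain1]; exact hchain2
    exact le_of_mul_le_mul_left h' hJpos
  -- Cauchy–Schwarz via nonnegativity of the variance
  have hmem : MemLp Xh 2 ℙ :=
    MemLp.of_bound hMXh.stronglyMeasurable.aestronglyMeasurable (N₁ * Ch)
      (ae_of_all _ fun ω => by rw [Real.norm_eq_abs]; exact hDXh ω)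
  have hCS : (∫ ω, Xh ω ∂ℙ) ^ 2 ≤ ∫ ω, Xh ω * Xh ω ∂ℙ := by
    have hv := ProbabilityTheory.variance_nonneg Xh ℙ
    rw [ProbabilityTheory.variance_eq_sub hmem] at hv
    have hsq : ∫ ω, (Xh ^ 2) ω ∂ℙ = ∫ ω, Xh ω * Xh ω ∂ℙ := by
      refine integral_congr_ae (ae_of_all _ fun ω => ?_)
      simp [pow_two]
    rw [hsq] at hv
    linarith
  have hcI : ((c : ℝ) * I) ^ 2 ≤ (c : ℝ) * J := by
    calc ((c : ℝ) * I) ^ 2 = (∫ ω, Xh ω ∂ℙ) ^ 2 := by rw [hCamh]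
    _ ≤ ∫ ω, Xh ω * Xh ω ∂ℙ := hCS
    _ ≤ (c : ℝ) * J := hEX2
  have hcpos : (0 : ℝ) < c := NNReal.coe_pos.2 hc
  have hfinal : (c : ℝ) * I ^ 2 ≤ J := by
    have h1 : (c : ℝ) * ((c : ℝ) * I ^ 2) ≤ (c : ℝ) * J := by
      calc (c : ℝ) * ((c : ℝ) * I ^ 2) = ((c : ℝ) * I) ^ 2 := by ring
      _ ≤ (c : ℝ) * J := hcI
    exact le_of_mul_le_mul_left h1 hcpos
  have hI2pos : 0 < I ^ 2 := lt_of_le_of_ne (sq_nonneg I) (Ne.symm (pow_ne_zero 2 hh_int))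
  rw [le_div_iff₀ hI2pos]
  exact hfinal
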